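/- Let δ > 0 and s₁ ≤ s₂ be real numbers. Define m_δ(ξ) = iξ · 2|ξ|/(e^{2δ|ξ|} − 1) for ξ ≠ 0 and m_δ(0) = 0. Then there exists a constant C depending only on s₂ − s₁ such that for all ξ ∈ ℝ, (1+ξ²)^{s₂/2} |m_δ(ξ)| ≤ C δ^{-2}(1 + δ^{s₁−s₂}) (1+ξ²)^{s₁/2}. -/

import Mathlib

open Real Complex Nat

lemma pow_div_fact_le (t : ℝ) (ht : 0 ≤ t) (n : ℕ) (hn : 1 ≤ n) :
    t ^ n / n ! ≤ Real.exp t - 1 := by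
  have h := Real.sum_le_exp_of_nonneg ht (n + 1)
  have hsub : ({0, n} : Finset ℕ) ⊆ Finset.range (n + 1) := by
    intro i hi
    simp only [Finset.mem_insert, Finset.mem_singleton] at hi
    rcases hi with rfl | rfl <;> simp [Nat.lt_succ_iff]
  have h2 := Finset.sum_le_sum_of_subset_of_nonneg hsub
    (fun i _ _ => by positivity : ∀ i ∈ Finset.range (n+1), i ∉ ({0,n} : Finset ℕ) → 0 ≤ t ^ i / i !)
  rw [Finset.sum_pair (by omega : (0:ℕ) ≠ n)] at h2
  simp only [pow_zero, Nat.factorial_zero] at h2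
  have : (1:ℝ) + t ^ n / n ! ≤ Real.exp t := le_trans (by norm_num at h2 ⊢; linarith) h
  linarith

lemma rpow_le_fact_mul (t a : ℝ) (ht : 0 < t) (ha : 1 ≤ a) :
    t ^ a ≤ (⌈a⌉₊)! * (Real.exp t - 1) := by
  have hE : 0 < Real.exp t - 1 := by
    have := Real.add_one_le_exp t; linarith
  have hn : 1 ≤ ⌈a⌉₊ := Nat.one_le_ceil_iff.2 (by linarith)
  have hfact : (1:ℝ) ≤ (⌈a⌉₊)! := by exact_mod_cast Nat.one_le_iff_ne_zero.2 (Nat.factorial_ne_zero _)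
  rcases le_or_gt t 1 with h1 | h1
  · have : t ^ a ≤ t ^ (1:ℝ) := Real.rpow_le_rpow_of_exponent_ge ht h1 ha
    rw [Real.rpow_one] at this
    have ht' : t ≤ Real.exp t - 1 := by have := Real.add_one_le_exp t; linarith
    calc t ^ a ≤ Real.exp t - 1 := le_trans this ht'
      _ ≤ (⌈a⌉₊)! * (Real.exp t - 1) := le_mul_of_one_le_left hE.le hfact
  · have h2 : t ^ a ≤ t ^ ((⌈a⌉₊ : ℝ)) :=
      Real.rpow_le_rpow_of_exponent_le h1.le (Nat.le_ceil a)
    rw [Real.rpow_natCast] at h2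
    have h3 := pow_div_fact_le t ht.le ⌈a⌉₊ hn
    have hf0 : (0:ℝ) < (⌈a⌉₊)! := by positivity
    calc t ^ a ≤ t ^ ⌈a⌉₊ := h2
      _ ≤ (⌈a⌉₊)! * (Real.exp t - 1) := by
          rw [div_le_iff₀ hf0] at h3; linarith [h3]

lemma key_bound (σ : ℝ) (hσ : 0 ≤ σ) (δ x : ℝ) (hδ : 0 < δ) (hx : 0 < x) :
    (1 + x ^ 2) ^ (σ / 2) * (2 * x ^ 2 / (Real.exp (2 * δ * x) - 1)) ≤
      (2:ℝ) ^ σ * (1 + (⌈2 + σ⌉₊)!) * δ ^ (-2:ℝ) * (1 + δ ^ (-σ)) := by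
  set t : ℝ := 2 * δ * x with htdef
  have ht : 0 < t := by positivity
  have hE : 0 < Real.exp t - 1 := by have := Real.add_one_le_exp t; linarith
  have hδ2 : δ ^ (-2:ℝ) = (δ ^ 2)⁻¹ := by
    rw [Real.rpow_neg hδ.le, Real.rpow_two]
  have hδσ : 0 < δ ^ (-σ) := Real.rpow_pos_of_pos hδ _
  have hxσ : 0 < x ^ σ := Real.rpow_pos_of_pos hx _
  have h2σ : (1:ℝ) ≤ (2:ℝ) ^ σ := Real.one_le_rpow (by norm_num) hσ
  have hδsq : (0:ℝ) < δ ^ 2 := by positivity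
  obtain ⟨m, hm⟩ : ∃ m : ℕ, m = ⌈2 + σ⌉₊ := ⟨_, rfl⟩
  rw [← hm]
  have hfm : (1:ℝ) ≤ (m)! := by exact_mod_cast Nat.one_le_iff_ne_zero.2 (Nat.factorial_ne_zero _)
  have hδσpos : 0 < δ ^ σ := Real.rpow_pos_of_pos hδ _
  have hδnσ : δ ^ (-σ) = (δ ^ σ)⁻¹ := Real.rpow_neg hδ.le _
  have hδ2pos : 0 < δ ^ (-2:ℝ) := Real.rpow_pos_of_pos hδ _
  -- Step A
  have hA : 2 * x ^ 2 / (Real.exp t - 1) ≤ δ ^ (-2:ℝ) := by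
    have h := pow_div_fact_le t ht.le 2 (by norm_num)
    have h' : t ^ 2 / 2 ≤ Real.exp t - 1 := by
      norm_num [Nat.factorial] at h; linarith
    have ht2' : t ^ 2 = 4 * δ ^ 2 * x ^ 2 := by rw [htdef]; ring
    rw [hδ2, div_le_iff₀ hE, inv_mul_eq_div, le_div_iff₀ hδsq]
    nlinarith [h', ht2']
  -- Step B
  have hB : 2 * (x ^ σ * x ^ 2) / (Real.exp t - 1) ≤ (m)! * (δ ^ (-2:ℝ) * δ ^ (-σ)) := by
    have h := rpow_le_fact_mul t (2 + σ) ht (by linarith)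
    rw [← hm] at h
    have ht2 : t ^ (2 + σ) = t ^ 2 * t ^ σ := by
      rw [Real.rpow_add ht]
      norm_num [Real.rpow_two]
    have htσ : t ^ σ = (2:ℝ) ^ σ * (δ ^ σ * x ^ σ) := by
      rw [htdef, Real.mul_rpow (by positivity) hx.le, Real.mul_rpow (by norm_num) hδ.le]
      ring
    have hbig : 4 * δ ^ 2 * x ^ 2 * (δ ^ σ * x ^ σ) ≤ (m)! * (Real.exp t - 1) := by
      calc 4 * δ ^ 2 * x ^ 2 * (δ ^ σ * x ^ σ)
          = (2*δ*x) ^ 2 * (1 * (δ ^ σ * x ^ σ)) := by ring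
        _ ≤ (2*δ*x) ^ 2 * ((2:ℝ) ^ σ * (δ ^ σ * x ^ σ)) := by
            apply mul_le_mul_of_nonneg_left _ (by positivity)
            apply mul_le_mul_of_nonneg_right h2σ (by positivity)
        _ = t ^ (2 + σ) := by rw [ht2, htσ, htdef]
        _ ≤ (m)! * (Real.exp t - 1) := h
    rw [hδ2, hδnσ, div_le_iff₀ hE]
    have hpos : 0 < δ ^ 2 * δ ^ σ := by positivity
    rw [show ((m)! : ℝ) * ((δ^2)⁻¹ * (δ^σ)⁻¹) = ((m)! : ℝ) / (δ^2 * δ^σ) by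
      field_simp, div_mul_eq_mul_div, le_div_iff₀ hpos]
    nlinarith [hbig, mul_pos hxσ (mul_pos hδ2pos hδσpos)]
  -- Step 1
  have h1 : (1 + x ^ 2) ^ (σ / 2) ≤ (2:ℝ) ^ σ * (1 + x ^ σ) := by
    have h2half : (2:ℝ) ^ (σ/2) ≤ (2:ℝ) ^ σ :=
      Real.rpow_le_rpow_of_exponent_le (by norm_num) (by linarith)
    rcases le_or_gt x 1 with hx1 | hx1
    · have : (1 + x ^ 2) ^ (σ/2) ≤ (2:ℝ) ^ (σ/2) :=
        Real.rpow_le_rpow (by positivity) (by nlinarith) (by positivity)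
      calc (1 + x ^ 2) ^ (σ/2) ≤ (2:ℝ) ^ (σ/2) := this
        _ ≤ (2:ℝ) ^ σ * 1 := by rw [mul_one]; exact h2half
        _ ≤ (2:ℝ) ^ σ * (1 + x ^ σ) :=
            mul_le_mul_of_nonneg_left (by linarith) (by positivity)
    · have hxx : (1 + x ^ 2 : ℝ) ≤ 2 * x ^ 2 := by nlinarith
      have e1 : ((x ^ 2 : ℝ)) ^ (σ/2) = x ^ σ := by
        rw [← Real.rpow_natCast x 2, ← Real.rpow_mul hx.le]
        congr 1
        ring
      have : (1 + x ^ 2) ^ (σ/2) ≤ (2 * x ^ 2) ^ (σ/2) :=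
        Real.rpow_le_rpow (by positivity) hxx (by positivity)
      rw [Real.mul_rpow (by norm_num) (by positivity), e1] at this
      calc (1 + x ^ 2) ^ (σ/2) ≤ (2:ℝ) ^ (σ/2) * x ^ σ := this
        _ ≤ (2:ℝ) ^ σ * x ^ σ := mul_le_mul_of_nonneg_right h2half hxσ.le
        _ ≤ (2:ℝ) ^ σ * (1 + x ^ σ) :=
            mul_le_mul_of_nonneg_left (by linarith) (by positivity)
  -- combine
  have hQpos : (0:ℝ) ≤ 2 * x ^ 2 / (Real.exp t - 1) := by positivity
  calc (1 + x ^ 2) ^ (σ / 2) * (2 * x ^ 2 / (Real.exp t - 1))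
      ≤ ((2:ℝ) ^ σ * (1 + x ^ σ)) * (2 * x ^ 2 / (Real.exp t - 1)) :=
        mul_le_mul_of_nonneg_right h1 hQpos
    _ = (2:ℝ) ^ σ * (2 * x ^ 2 / (Real.exp t - 1) + 2 * (x ^ σ * x ^ 2) / (Real.exp t - 1)) := by
        ring
    _ ≤ (2:ℝ) ^ σ * (δ ^ (-2:ℝ) + (m)! * (δ ^ (-2:ℝ) * δ ^ (-σ))) :=
        mul_le_mul_of_nonneg_left (add_le_add hA hB) (by positivity)
    _ ≤ (2:ℝ) ^ σ * (1 + (m)!) * δ ^ (-2:ℝ) * (1 + δ ^ (-σ)) := by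
        have e : (2:ℝ) ^ σ * (1 + (m)!) * δ ^ (-2:ℝ) * (1 + δ ^ (-σ)) =
            (2:ℝ) ^ σ * ((δ ^ (-2:ℝ) + (m)! * (δ ^ (-2:ℝ) * δ ^ (-σ))) +
              (δ ^ (-2:ℝ) * δ ^ (-σ) + (m)! * δ ^ (-2:ℝ))) := by ring
        rw [e]
        have hnn : (0:ℝ) ≤ δ ^ (-2:ℝ) * δ ^ (-σ) + (m)! * δ ^ (-2:ℝ) := by positivity
        exact mul_le_mul_of_nonneg_left (le_add_of_nonneg_right hnn) (by positivity)

theorem stmt_2 (s₁ s₂ : ℝ) (hs : s₁ ≤ s₂) :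
    ∃ C : ℝ, 0 < C ∧ ∀ δ : ℝ, 0 < δ → ∀ ξ : ℝ,
      (1 + ξ ^ 2) ^ (s₂ / 2) *
        ‖(if ξ = 0 then 0 else
          Complex.I * (ξ : ℂ) * ((2 * |ξ| / (Real.exp (2 * δ * |ξ|) - 1) : ℝ) : ℂ) : ℂ)‖
      ≤ C * δ ^ (-2 : ℝ) * (1 + δ ^ (s₁ - s₂)) * (1 + ξ ^ 2) ^ (s₁ / 2) := by
  set σ := s₂ - s₁ with hσdef
  have hσ : 0 ≤ σ := by simp [hσdef]; linarith
  refine ⟨(2:ℝ) ^ σ * (1 + (⌈2 + σ⌉₊)!), by positivity, ?_⟩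
  intro δ hδ ξ
  have hss : s₁ - s₂ = -σ := by rw [hσdef]; ring
  by_cases hξ : ξ = 0
  · simp only [hξ, if_pos, norm_zero, mul_zero]
    have h1 : 0 < δ ^ (-2:ℝ) := Real.rpow_pos_of_pos hδ _
    have h2 : 0 < δ ^ (s₁ - s₂) := Real.rpow_pos_of_pos hδ _
    have h3 : (0:ℝ) < ((1:ℝ) + 0 ^ 2) ^ (s₁ / 2) := Real.rpow_pos_of_pos (by norm_num) _
    have hC : (0:ℝ) < (2:ℝ) ^ σ * (1 + (⌈2 + σ⌉₊)!) := by positivity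
    positivity
  · rw [if_neg hξ]
    have hx : 0 < |ξ| := abs_pos.2 hξ
    have ht : 0 < 2 * δ * |ξ| := by positivity
    have hE : 0 < Real.exp (2 * δ * |ξ|) - 1 := by
      have := Real.add_one_le_exp (2 * δ * |ξ|); linarith
    have hr : 0 ≤ 2 * |ξ| / (Real.exp (2 * δ * |ξ|) - 1) := by positivity
    have habs : ‖(Complex.I * (ξ:ℂ) *
        ((2 * |ξ| / (Real.exp (2 * δ * |ξ|) - 1) : ℝ) : ℂ))‖ =
        2 * ξ ^ 2 / (Real.exp (2 * δ * |ξ|) - 1) := by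
      rw [norm_mul, norm_mul, Complex.norm_I, one_mul, Complex.norm_real, Complex.norm_real,
        Real.norm_eq_abs, Real.norm_eq_abs,
        _root_.abs_of_nonneg hr]
      rw [eq_div_iff hE.ne']
      rw [mul_assoc, div_mul_cancel₀ _ hE.ne']
      rw [← _root_.sq_abs ξ]
      ring
    rw [habs]
    have key := key_bound σ hσ δ |ξ| hδ hx
    rw [_root_.sq_abs ξ] at key
    have hsplit : ((1:ℝ) + ξ ^ 2) ^ (s₂ / 2) =
        (1 + ξ ^ 2) ^ (σ / 2) * (1 + ξ ^ 2) ^ (s₁ / 2) := by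
      rw [← Real.rpow_add (by positivity)]
      congr 1
      rw [hσdef]; ring
    rw [hsplit, hss]
    have hrpow : (0:ℝ) ≤ (1 + ξ ^ 2) ^ (s₁ / 2) := by positivity
    calc (1 + ξ ^ 2) ^ (σ / 2) * (1 + ξ ^ 2) ^ (s₁ / 2) *
          (2 * ξ ^ 2 / (Real.exp (2 * δ * |ξ|) - 1))
        = ((1 + ξ ^ 2) ^ (σ / 2) * (2 * ξ ^ 2 / (Real.exp (2 * δ * |ξ|) - 1))) *
          (1 + ξ ^ 2) ^ (s₁ / 2) := by ring
      _ ≤ ((2:ℝ) ^ σ * (1 + (⌈2 + σ⌉₊)!) * δ ^ (-2:ℝ) * (1 + δ ^ (-σ))) *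
          (1 + ξ ^ 2) ^ (s₁ / 2) := mul_le_mul_of_nonneg_right key hrpow
      _ = (2:ℝ) ^ σ * (1 + (⌈2 + σ⌉₊)!) * δ ^ (-2:ℝ) * (1 + δ ^ (-σ)) *
          (1 + ξ ^ 2) ^ (s₁ / 2) := by ring
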